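/- For every integer d ≥ 1, every finite simple graph with minimum degree at least 2d contains a (nonempty) subgraph that is bipartite and has minimum degree at least d. -/

import Mathlib

open Finset

private lemma bool_ne_not : ∀ a b : Bool, ((!a) ≠ b ↔ b = a) := by decide

/-- For every integer `d ≥ 1`, every finite simple graph with minimum degree at least `2d`
contains a nonempty bipartite subgraph with minimum degree at least `d`. -/
theorem stmt1 {V : Type*} [Fintype V] [Nonempty V] (d : ℕ) (hd : 1 ≤ d)
    (G : SimpleGraph V) [DecidableRel G.Adj] (h : 2 * d ≤ G.minDegree) :
    ∃ H : G.Subgraph, H.verts.Nonempty ∧ H.coe.Colorable 2 ∧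
      ∀ v ∈ H.verts, d ≤ (H.neighborSet v).ncard := by
  classical
  set F : (V → Bool) → ℤ := fun f =>
    ∑ v, ∑ w, (if G.Adj v w ∧ f w ≠ f v then (1 : ℤ) else 0) with hFdef
  obtain ⟨f, -, hf⟩ := Finset.exists_max_image (Finset.univ : Finset (V → Bool)) F
    ⟨fun _ => true, mem_univ _⟩
  -- key: at every vertex, the number of differently-colored neighbors is at least d
  have key : ∀ v0 : V, (d : ℤ) ≤ ∑ w, (if G.Adj v0 w ∧ f w ≠ f v0 then (1 : ℤ) else 0) := by
    intro v0
    set f' := Function.update f v0 (!f v0) with hf'def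
    have hupd0 : f' v0 = !f v0 := Function.update_self _ _ _
    have hupd : ∀ w, w ≠ v0 → f' w = f w := fun w hw => Function.update_of_ne hw _ _
    set A : ℤ := ∑ w, (if G.Adj v0 w ∧ f w = f v0 then (1 : ℤ) else 0) with hAdef
    set B : ℤ := ∑ w, (if G.Adj v0 w ∧ f w ≠ f v0 then (1 : ℤ) else 0) with hBdef
    have hdiff : F f' - F f = 2 * A - 2 * B := by
      have hrw : F f' - F f = ∑ v, ∑ w,
          ((if G.Adj v w ∧ f' w ≠ f' v then (1 : ℤ) else 0)
            - (if G.Adj v w ∧ f w ≠ f v then (1 : ℤ) else 0)) := by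
        rw [hFdef]
        rw [← Finset.sum_sub_distrib]
        refine Finset.sum_congr rfl fun v _ => ?_
        rw [← Finset.sum_sub_distrib]
      -- inner sum at v0
      have hv0 : ∑ w, ((if G.Adj v0 w ∧ f' w ≠ f' v0 then (1 : ℤ) else 0)
            - (if G.Adj v0 w ∧ f w ≠ f v0 then (1 : ℤ) else 0)) = A - B := by
        rw [Finset.sum_sub_distrib]
        congr 1
        refine Finset.sum_congr rfl fun w _ => ?_
        by_cases hw : w = v0
        · subst hw; simp [G.irrefl]
        · rw [hupd w hw, hupd0]
          refine if_congr (and_congr_right fun _ => ?_) rfl rfl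
          rw [ne_comm, bool_ne_not]
      -- inner sum at v ≠ v0
      have hvne : ∀ v, v ≠ v0 → ∑ w, ((if G.Adj v w ∧ f' w ≠ f' v then (1 : ℤ) else 0)
            - (if G.Adj v w ∧ f w ≠ f v then (1 : ℤ) else 0))
          = (if G.Adj v0 v ∧ f v = f v0 then (1 : ℤ) else 0)
            - (if G.Adj v0 v ∧ f v0 ≠ f v then (1 : ℤ) else 0) := by
        intro v hv
        rw [Finset.sum_eq_single v0]
        · rw [hupd v hv, hupd0]
          have h1 : (G.Adj v v0 ∧ (!f v0) ≠ f v) ↔ (G.Adj v0 v ∧ f v = f v0) := by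
            constructor
            · rintro ⟨ha, hb⟩; exact ⟨ha.symm, (bool_ne_not _ _).1 hb⟩
            · rintro ⟨ha, hb⟩; exact ⟨ha.symm, (bool_ne_not _ _).2 hb⟩
          have h2 : (G.Adj v v0 ∧ f v0 ≠ f v) ↔ (G.Adj v0 v ∧ f v0 ≠ f v) := by
            constructor
            · rintro ⟨ha, hb⟩; exact ⟨ha.symm, hb⟩
            · rintro ⟨ha, hb⟩; exact ⟨ha.symm, hb⟩
          rw [if_congr h1 rfl rfl, if_congr h2 rfl rfl]
        · intro w _ hw
          rw [hupd w hw, hupd v hv, sub_self]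
        · intro hc; exact absurd (mem_univ v0) hc
      rw [hrw, ← Finset.sum_erase_add _ _ (mem_univ v0), hv0]
      have hmid : ∑ v ∈ Finset.univ.erase v0, ∑ w,
          ((if G.Adj v w ∧ f' w ≠ f' v then (1 : ℤ) else 0)
            - (if G.Adj v w ∧ f w ≠ f v then (1 : ℤ) else 0))
          = ∑ v ∈ Finset.univ.erase v0,
            ((if G.Adj v0 v ∧ f v = f v0 then (1 : ℤ) else 0)
              - (if G.Adj v0 v ∧ f v0 ≠ f v then (1 : ℤ) else 0)) :=
        Finset.sum_congr rfl fun v hv => hvne v (Finset.ne_of_mem_erase hv)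
      rw [hmid]
      have hext : ∑ v ∈ Finset.univ.erase v0,
            ((if G.Adj v0 v ∧ f v = f v0 then (1 : ℤ) else 0)
              - (if G.Adj v0 v ∧ f v0 ≠ f v then (1 : ℤ) else 0))
          = ∑ v, ((if G.Adj v0 v ∧ f v = f v0 then (1 : ℤ) else 0)
              - (if G.Adj v0 v ∧ f v0 ≠ f v then (1 : ℤ) else 0)) := by
        rw [← Finset.sum_erase_add _ _ (mem_univ v0)]
        simp [G.irrefl]
      rw [hext, Finset.sum_sub_distrib]
      have hB' : ∑ v, (if G.Adj v0 v ∧ f v0 ≠ f v then (1 : ℤ) else 0) = B := by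
        rw [hBdef]
        refine Finset.sum_congr rfl fun w _ => ?_
        exact if_congr (and_congr_right fun _ => ne_comm) rfl rfl
      rw [hB', hAdef]
      ring
    have hle : F f' ≤ F f := hf f' (mem_univ _)
    have hABle : A ≤ B := by linarith
    have hABdeg : A + B = (G.degree v0 : ℤ) := by
      have hsum : A + B = ∑ w, (if G.Adj v0 w then (1 : ℤ) else 0) := by
        rw [hAdef, hBdef, ← Finset.sum_add_distrib]
        refine Finset.sum_congr rfl fun w _ => ?_
        by_cases ha : G.Adj v0 w
        · by_cases he : f w = f v0 <;> simp [ha, he]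
        · simp [ha]
      rw [hsum, Finset.sum_boole, SimpleGraph.degree]
      congr 1
      rw [SimpleGraph.neighborFinset_eq_filter]
    have hdeg : (2 * d : ℤ) ≤ (G.degree v0 : ℤ) := by
      exact_mod_cast le_trans h (G.minDegree_le_degree v0)
    linarith
  -- build the cut subgraph
  refine ⟨{ verts := Set.univ
            Adj := fun a b => G.Adj a b ∧ f a ≠ f b
            adj_sub := fun hab => hab.1
            edge_vert := fun _ => trivial
            symm := ⟨fun a b hab => ⟨hab.1.symm, hab.2.symm⟩⟩ }, ⟨Classical.arbitrary V, trivial⟩,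
        ?_, ?_⟩
  · refine ⟨SimpleGraph.Coloring.mk (fun v => if f v.1 then 0 else 1) ?_⟩
    rintro a b hab
    have hne := hab.2
    cases ha : f a.1 <;> cases hb : f b.1 <;> simp_all
  · intro v _
    have hset : (SimpleGraph.Subgraph.neighborSet
        { verts := Set.univ
          Adj := fun a b => G.Adj a b ∧ f a ≠ f b
          adj_sub := fun hab => hab.1
          edge_vert := fun _ => trivial
          symm := ⟨fun a b hab => ⟨hab.1.symm, hab.2.symm⟩⟩ } v)
        = ↑(Finset.univ.filter (fun w => G.Adj v w ∧ f w ≠ f v)) := by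
      ext w
      simp [SimpleGraph.Subgraph.neighborSet, ne_comm]
    rw [hset, Set.ncard_coe_finset]
    have hk := key v
    have hcast : (↑(Finset.univ.filter (fun w => G.Adj v w ∧ f w ≠ f v)).card : ℤ)
        = ∑ w, (if G.Adj v w ∧ f w ≠ f v then (1 : ℤ) else 0) := by
      rw [Finset.sum_boole]
    omega
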